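/- For every x in [0,1] and every natural number i ≥ 0, ∫_0^{x/3^i} f(t) dt = (2/9)^i · ∫_0^x f(t) dt. -/
import Mathlib

open intervalIntegral Set

theorem bourbaki_stmt (f : ℝ → ℝ)
    (hcont : ContinuousOn f (Set.Icc 0 1))
    (h0 : f 0 = 0) (h1 : f 1 = 1)
    (hw1 : ∀ x ∈ Set.Icc (0:ℝ) 1, f (x / 3) = (2/3) * f x)
    (hw2 : ∀ x ∈ Set.Icc (0:ℝ) 1, f ((2 - x) / 3) = (1/3) * (1 + f x))
    (hw3 : ∀ x ∈ Set.Icc (0:ℝ) 1, f ((2 + x) / 3) = 1/3 + (2/3) * f x) :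
    ∀ x ∈ Set.Icc (0:ℝ) 1, ∀ i : ℕ, ∫ t in (0:ℝ)..(x / 3 ^ i), f t = (2/9) ^ i * ∫ t in (0:ℝ)..x, f t := by
  have key : ∀ x ∈ Set.Icc (0:ℝ) 1, ∫ t in (0:ℝ)..(x / 3), f t = (2/9) * ∫ t in (0:ℝ)..x, f t := by
    intro x hx
    have h3 : (3:ℝ) ≠ 0 := by norm_num
    have hcomp := intervalIntegral.integral_comp_div (a := 0) (b := x) (f := f) h3
    have hcong : ∫ u in (0:ℝ)..x, f (u / 3) = ∫ u in (0:ℝ)..x, (2/3) * f u := by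
      apply intervalIntegral.integral_congr
      intro u hu
      rw [Set.uIcc_of_le hx.1] at hu
      exact hw1 u ⟨hu.1, le_trans hu.2 hx.2⟩
    have hmul : ∫ u in (0:ℝ)..x, (2/3) * f u = (2/3) * ∫ u in (0:ℝ)..x, f u :=
      intervalIntegral.integral_const_mul _ _
    rw [hcong, hmul] at hcomp
    rw [show (0:ℝ)/3 = 0 by norm_num] at hcomp
    have := hcomp.symm
    rw [smul_eq_mul] at this
    linarith
  intro x hx i
  induction i with
  | zero => simp
  | succ n ih =>
    have hxn : x / 3 ^ n ∈ Set.Icc (0:ℝ) 1 := by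
      constructor
      · exact div_nonneg hx.1 (by positivity)
      · calc x / 3 ^ n ≤ 1 / 3 ^ n := by
              apply div_le_div_of_nonneg_right hx.2 (by positivity) |>.trans_eq rfl
            _ ≤ 1 := by
              rw [div_le_one (by positivity)]
              exact one_le_pow₀ (by norm_num)
    have : x / 3 ^ (n + 1) = (x / 3 ^ n) / 3 := by ring
    rw [this, key _ hxn, ih, pow_succ]
    ring
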